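/- Let (G, ≺) be a finitely generated left-ordered group and suppose Z is a finitely generated, central subgroup that is cofinal for ≺ (for every g ∈ G there exist z₁, z₂ ∈ Z with z₁ ≺ g ≺ z₂). Then the positive cone P = {g : 1 ≺ g} is coarsely connected in any Cayley graph of G with respect to a finite generating set. -/

import Mathlib

open scoped Pointwise

/-- A positive cone of a group `G`: a subsemigroup `P` such that
`G = P ⊔ P⁻¹ ⊔ {1}` (disjoint union). -/
def IsPositiveCone {G : Type*} [Group G] (P : Set G) : Prop :=
  (∀ a ∈ P, ∀ b ∈ P, a * b ∈ P) ∧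
  (∀ g : G, g ∈ P ∨ g⁻¹ ∈ P ∨ g = 1) ∧
  (∀ g ∈ P, g⁻¹ ∉ P) ∧
  (1 : G) ∉ P

/-- Word length of `g` with respect to the generating set `X`. -/
noncomputable def wordLength {G : Type*} [Group G] (X : Set G) (g : G) : ℕ :=
  sInf {n | ∃ l : List G, (∀ x ∈ l, x ∈ X) ∧ l.length = n ∧ l.prod = g}

/-- Word metric on `G` with respect to `X`. -/
noncomputable def wordDist {G : Type*} [Group G] (X : Set G) (g h : G) : ℕ :=
  wordLength X (g⁻¹ * h)

/-- An `r`-path from `a` to `b` supported in `S` (consecutive word-metric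
distances at most `r`). -/
def IsRPath {G : Type*} [Group G] (X : Set G) (r : ℕ) (S : Set G) (a b : G) : Prop :=
  ∃ l : List G, l ≠ [] ∧ l.head? = some a ∧ l.getLast? = some b ∧
    (∀ x ∈ l, x ∈ S) ∧ l.Chain' (fun u v => wordDist X u v ≤ r)

/-- `S` is `r`-coarsely connected in the Cayley graph `Γ(G,X)`. -/
def CoarselyConnectedWith {G : Type*} [Group G] (X : Set G) (r : ℕ) (S : Set G) : Prop :=
  ∀ a ∈ S, ∀ b ∈ S, IsRPath X r S a b

/-- `X` is a finite symmetric generating set of `G`. -/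
def IsGenSet {G : Type*} [Group G] (X : Set G) : Prop :=
  X.Finite ∧ (∀ x ∈ X, x⁻¹ ∈ X) ∧ Subgroup.closure X = ⊤

/-- A positive cone on a subset `K` of `G` (used for subgroups such as kernels). -/
def IsPositiveConeOn {G : Type*} [Group G] (K P : Set G) : Prop :=
  P ⊆ K ∧ (∀ a ∈ P, ∀ b ∈ P, a * b ∈ P) ∧ (∀ g ∈ K, g ∈ P ∨ g⁻¹ ∈ P ∨ g = 1) ∧
  (∀ g ∈ P, g⁻¹ ∉ P) ∧ (1 : G) ∉ P

/-- The sub-semigroup generated by `S`: nonempty products of elements of `S`. -/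
def SemigroupClosure {G : Type*} [Group G] (S : Set G) : Set G :=
  {g | ∃ l : List G, l ≠ [] ∧ (∀ x ∈ l, x ∈ S) ∧ l.prod = g}

section Aux
variable {G : Type*} [Group G]

lemma wordLength_one' (X : Set G) : wordLength X 1 = 0 :=
  Nat.eq_zero_of_le_zero (Nat.sInf_le ⟨[], by simp, by simp, by simp⟩)

lemma wordLength_le_one' {X : Set G} {x : G} (hx : x ∈ X) : wordLength X x ≤ 1 :=
  Nat.sInf_le ⟨[x], by simp [hx], by simp, by simp⟩

lemma wordLength_inv' {X : Set G} (hsym : ∀ x ∈ X, x⁻¹ ∈ X) (g : G) :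
    wordLength X g⁻¹ = wordLength X g := by
  have key : ∀ h : G, ∀ n : ℕ,
      (∃ l : List G, (∀ x ∈ l, x ∈ X) ∧ l.length = n ∧ l.prod = h) →
      (∃ l : List G, (∀ x ∈ l, x ∈ X) ∧ l.length = n ∧ l.prod = h⁻¹) := by
    rintro h n ⟨l, hl, rfl, rfl⟩
    refine ⟨(l.map fun x => x⁻¹).reverse, ?_, by simp, (List.prod_inv_reverse l).symm⟩
    intro x hx
    simp only [List.mem_reverse, List.mem_map] at hx
    obtain ⟨y, hy, rfl⟩ := hx
    exact hsym y (hl y hy)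
  unfold wordLength
  congr 1
  ext n
  constructor
  · intro h; simpa using key g⁻¹ n h
  · intro h; exact key g n h

lemma wordDist_self_zero (X : Set G) (g : G) : wordDist X g g = 0 := by
  unfold wordDist
  rw [inv_mul_cancel]
  exact wordLength_one' X

lemma wordDist_comm' {X : Set G} (hsym : ∀ x ∈ X, x⁻¹ ∈ X) (u v : G) :
    wordDist X u v = wordDist X v u := by
  unfold wordDist
  rw [← wordLength_inv' hsym (u⁻¹ * v), mul_inv_rev, inv_inv]

lemma isRPath_of_fun {X S : Set G} {ρ : ℕ} (f : ℕ → G) (n : ℕ)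
    (hS : ∀ i ≤ n, f i ∈ S) (hd : ∀ i < n, wordDist X (f i) (f (i+1)) ≤ ρ) :
    IsRPath X ρ S (f 0) (f n) := by
  refine ⟨(List.range (n+1)).map f, by simp, ?_, ?_, ?_, ?_⟩
  · rw [List.head?_map]
    simp [List.range_succ_eq_map]
  · rw [List.range_succ, List.map_append]
    simp
  · intro x hx
    simp only [List.mem_map, List.mem_range] at hx
    obtain ⟨i, hi, rfl⟩ := hx
    exact hS i (by omega)
  · show List.IsChain _ _; rw [List.isChain_map]
    exact (List.isChain_range_succ _ n).mpr fun m hm => hd m hm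

lemma isRPath_trans' {X S : Set G} {ρ : ℕ} {a b c : G}
    (h1 : IsRPath X ρ S a b) (h2 : IsRPath X ρ S b c) : IsRPath X ρ S a c := by
  obtain ⟨l₁, n₁, hh₁, hg₁, hs₁, hc₁⟩ := h1
  obtain ⟨l₂, n₂, hh₂, hg₂, hs₂, hc₂⟩ := h2
  refine ⟨l₁ ++ l₂, by simp [n₁], ?_, ?_, ?_, ?_⟩
  · rw [List.head?_append_of_ne_nil _ n₁]; exact hh₁
  · rw [List.getLast?_append_of_ne_nil _ n₂]; exact hg₂
  · intro x hx
    rcases List.mem_append.mp hx with h | h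
    exacts [hs₁ x h, hs₂ x h]
  · refine List.isChain_append.mpr ⟨hc₁, hc₂, ?_⟩
    intro x hx y hy
    rw [hg₁] at hx; rw [hh₂] at hy
    cases hx; cases hy
    simp [wordDist_self_zero]

lemma isRPath_symm' {X S : Set G} {ρ : ℕ} (hsym : ∀ x ∈ X, x⁻¹ ∈ X) {a b : G}
    (h : IsRPath X ρ S a b) : IsRPath X ρ S b a := by
  obtain ⟨l, hne, hh, hg, hs, hc⟩ := h
  refine ⟨l.reverse, by simpa, ?_, ?_, by simpa, ?_⟩
  · rwa [List.head?_reverse]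
  · rwa [List.getLast?_reverse]
  · show List.IsChain _ _; rw [List.isChain_reverse]
    refine hc.imp ?_
    intro u v huv
    show wordDist X v u ≤ ρ
    rwa [wordDist_comm' hsym]

lemma exists_word' {X : Set G} (hsym : ∀ x ∈ X, x⁻¹ ∈ X)
    (hgen : Subgroup.closure X = ⊤) (g : G) :
    ∃ l : List G, (∀ x ∈ l, x ∈ X) ∧ l.prod = g := by
  have hg : g ∈ Subgroup.closure X := by rw [hgen]; trivial
  induction hg using Subgroup.closure_induction with
  | mem x hx => exact ⟨[x], by simp [hx], by simp⟩
  | one => exact ⟨[], by simp, by simp⟩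
  | mul x y hx hy ihx ihy =>
      obtain ⟨l₁, h₁, rfl⟩ := ihx
      obtain ⟨l₂, h₂, rfl⟩ := ihy
      refine ⟨l₁ ++ l₂, ?_, by simp⟩
      intro x hx
      rcases List.mem_append.mp hx with h | h
      exacts [h₁ x h, h₂ x h]
  | inv x hx ihx =>
      obtain ⟨l, h, rfl⟩ := ihx
      refine ⟨(l.map fun x => x⁻¹).reverse, ?_, (List.prod_inv_reverse l).symm⟩
      intro x hx
      simp only [List.mem_reverse, List.mem_map] at hx
      obtain ⟨y, hy, rfl⟩ := hx
      exact hsym y (h y hy)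

end Aux

/-- if a finitely generated left-ordered group has a finitely
generated central cofinal subgroup, then the positive cone is coarsely
connected (in any Cayley graph with respect to a finite generating set). -/
theorem stmt_10 {G : Type*} [Group G] (X : Set G) (hX : IsGenSet X)
    (r : G → G → Prop)
    (hirr : ∀ a : G, ¬ r a a)
    (htrans : ∀ a b c : G, r a b → r b c → r a c)
    (htri : ∀ a b : G, r a b ∨ a = b ∨ r b a)
    (hleft : ∀ g a b : G, r a b → r (g * a) (g * b))
    (Z : Subgroup G) (hZfg : Z.FG) (hZcent : Z ≤ Subgroup.center G)
    (hcof : ∀ g : G, ∃ z₁ ∈ Z, ∃ z₂ ∈ Z, r z₁ g ∧ r g z₂) :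
    ∃ ρ : ℕ, 1 ≤ ρ ∧ CoarselyConnectedWith X ρ {g : G | r 1 g} := by
  classical
  obtain ⟨hXfin, hXsym, hXgen⟩ := hX
  have hcentral : ∀ z ∈ Z, ∀ g : G, z * g = g * z := fun z hz g =>
    ((Subgroup.mem_center_iff.mp (hZcent hz)) g).symm
  -- multiplicativity of the positive cone
  have hmul : ∀ {a b : G}, r 1 a → r 1 b → r 1 (a * b) := by
    intro a b ha hb
    have h := hleft a 1 b hb
    rw [mul_one] at h
    exact htrans _ _ _ ha h
  have hmul1 : ∀ {a b : G}, (r 1 a ∨ a = 1) → (r 1 b ∨ b = 1) →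
      (r 1 (a * b) ∨ a * b = 1) := by
    rintro a b (ha | rfl) (hb | rfl)
    · exact Or.inl (hmul ha hb)
    · rw [mul_one]; exact Or.inl ha
    · rw [one_mul]; exact Or.inl hb
    · rw [mul_one]; exact Or.inr rfl
  have hprod1 : ∀ l : List G, (∀ u ∈ l, r 1 u ∨ u = 1) →
      (r 1 l.prod ∨ (l.prod = 1 ∧ ∀ u ∈ l, u = 1)) := by
    intro l
    induction l with
    | nil => intro _; exact Or.inr ⟨by simp, by simp⟩
    | cons u t ih =>
        intro h
        have hu := h u (by simp)
        have ht := ih (fun v hv => h v (by simp [hv]))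
        rw [List.prod_cons]
        rcases hu with hu | rfl
        · rcases ht with ht | ⟨ht, _⟩
          · exact Or.inl (hmul hu ht)
          · rw [ht, mul_one]; exact Or.inl hu
        · rw [one_mul]
          rcases ht with ht | ⟨ht, hall⟩
          · exact Or.inl ht
          · refine Or.inr ⟨ht, ?_⟩
            intro v hv
            rcases List.mem_cons.mp hv with rfl | hv
            · rfl
            · exact hall v hv
  -- choose positive generators for Z
  obtain ⟨Sgen, hSgen⟩ := hZfg
  set y : G → G := fun g => if r 1 g then g else g⁻¹ with hy
  set ys : List G := Sgen.toList.map y with hysdef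
  set σ : G := ys.prod with hσdef
  have hyP1 : ∀ g : G, r 1 (y g) ∨ y g = 1 := by
    intro g
    by_cases h : r 1 g
    · left; simpa [hy, h]
    · rcases htri 1 g with h1 | h1 | h1
      · exact absurd h1 h
      · right; simp [hy, h, ← h1]
      · left
        have h2 := hleft g⁻¹ g 1 h1
        rw [inv_mul_cancel, mul_one] at h2
        simpa [hy, h]
  have hyZ : ∀ g ∈ Z, y g ∈ Z := by
    intro g hg
    by_cases h : r 1 g
    · simpa [hy, h]
    · simpa [hy, h] using inv_mem hg
  have hysP1 : ∀ u ∈ ys, r 1 u ∨ u = 1 := by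
    intro u hu
    rw [hysdef] at hu
    simp only [List.mem_map] at hu
    obtain ⟨g, _, rfl⟩ := hu
    exact hyP1 g
  have hysZ : ∀ u ∈ ys, u ∈ Z := by
    intro u hu
    rw [hysdef] at hu
    simp only [List.mem_map, Finset.mem_toList] at hu
    obtain ⟨g, hg, rfl⟩ := hu
    exact hyZ g (hSgen ▸ Subgroup.subset_closure hg)
  have hσZ : σ ∈ Z := list_prod_mem hysZ
  rcases hprod1 ys hysP1 with hσP | ⟨hσ1, hall⟩
  swap
  · -- degenerate case: all generators trivial, contradicting cofinality
    exfalso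
    have hSub : Subgroup.closure (↑Sgen : Set G) ≤ ⊥ := by
      rw [Subgroup.closure_le]
      intro g hg
      have hyg : y g = 1 := by
        apply hall
        rw [hysdef]
        simp only [List.mem_map]
        exact ⟨g, by simpa using hg, rfl⟩
      have : g = 1 := by
        by_cases h : r 1 g
        · simpa [hy, h] using hyg
        · simp only [hy] at hyg
          rw [if_neg h] at hyg
          simpa using congrArg Inv.inv hyg
      simpa [this] using Subgroup.one_mem ⊥
    obtain ⟨z₁, hz₁, z₂, hz₂, h1, _⟩ := hcof 1
    rw [← hSgen] at hz₁
    have : z₁ = 1 := by simpa [Subgroup.mem_bot] using hSub hz₁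
    rw [this] at h1
    exact hirr 1 h1
  -- main case: σ is positive
  have hσpow : ∀ k : ℕ, 1 ≤ k → r 1 (σ ^ k) := by
    intro k hk
    induction k with
    | zero => omega
    | succ k ih =>
        rcases Nat.eq_or_lt_of_le hk with h | h
        · rw [← h, pow_one]; exact hσP
        · rw [pow_succ]
          exact hmul (ih (by omega)) hσP
  have hσZpow : ∀ k : ℕ, σ ^ k ∈ Z := fun k => pow_mem hσZ k
  have hσcen : ∀ (k : ℕ) (g : G), σ ^ k * g = g * σ ^ k :=
    fun k g => hcentral _ (hσZpow k) g
  -- removing a generator from σ keeps it nonnegative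
  have hrem : ∀ u ∈ ys, r 1 (σ * u⁻¹) ∨ σ * u⁻¹ = 1 := by
    intro u hu
    obtain ⟨s, t, hst⟩ := List.append_of_mem hu
    have huZ : u ∈ Z := hysZ u hu
    have hcomm : u * t.prod = t.prod * u := hcentral u huZ t.prod
    have hσeq : σ * u⁻¹ = (s ++ t).prod := by
      rw [hσdef, hst]
      rw [List.prod_append, List.prod_cons, List.prod_append]
      rw [hcomm]
      group
    rw [hσeq]
    refine (hprod1 (s ++ t) ?_).imp id And.left
    intro v hv
    apply hysP1
    rw [hst]
    rcases List.mem_append.mp hv with h | h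
    · exact List.mem_append.mpr (Or.inl h)
    · exact List.mem_append.mpr (Or.inr (by simp [h]))
  -- powers of σ dominate Z
  have hdom : ∀ z ∈ Z, ∃ k : ℕ, r 1 (σ ^ k * z⁻¹) ∨ σ ^ k * z⁻¹ = 1 := by
    intro z hz
    rw [← hSgen] at hz
    suffices h : (∃ k : ℕ, r 1 (σ ^ k * z⁻¹) ∨ σ ^ k * z⁻¹ = 1) ∧
        (∃ k : ℕ, r 1 (σ ^ k * z) ∨ σ ^ k * z = 1) from h.1
    induction hz using Subgroup.closure_induction with
    | mem g hg =>
        by_cases h : r 1 g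
        · have hmem : g ∈ ys := by
            rw [hysdef]
            simp only [List.mem_map]
            exact ⟨g, by simpa using hg, by simp [hy, h]⟩
          exact ⟨⟨1, by simpa [pow_one] using hrem g hmem⟩,
            ⟨0, by rw [pow_zero, one_mul]; exact Or.inl h⟩⟩
        · have hmem : g⁻¹ ∈ ys := by
            rw [hysdef]
            simp only [List.mem_map]
            exact ⟨g, by simpa using hg, by simp [hy, h]⟩
          have hginv : r 1 g⁻¹ ∨ g⁻¹ = 1 := by simpa [hy, h] using hyP1 g
          exact ⟨⟨0, by rw [pow_zero, one_mul]; exact hginv⟩,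
            ⟨1, by simpa [pow_one, inv_inv] using hrem g⁻¹ hmem⟩⟩
    | one => exact ⟨⟨0, by simp⟩, ⟨0, by simp⟩⟩
    | mul a b ha hb iha ihb =>
        have haZ : a ∈ Z := hSgen ▸ ha
        have hbZ : b ∈ Z := hSgen ▸ hb
        obtain ⟨⟨k1, h1⟩, ⟨k1', h1'⟩⟩ := iha
        obtain ⟨⟨k2, h2⟩, ⟨k2', h2'⟩⟩ := ihb
        constructor
        · refine ⟨k1 + k2, ?_⟩
          have he : σ ^ (k1 + k2) * (a * b)⁻¹ = (σ ^ k1 * a⁻¹) * (σ ^ k2 * b⁻¹) := by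
            have c1 : a⁻¹ * σ ^ k2 = σ ^ k2 * a⁻¹ := hcentral a⁻¹ (inv_mem haZ) _
            have c2 : a⁻¹ * b⁻¹ = b⁻¹ * a⁻¹ := hcentral a⁻¹ (inv_mem haZ) _
            calc σ ^ (k1 + k2) * (a * b)⁻¹
                = σ ^ k1 * σ ^ k2 * (b⁻¹ * a⁻¹) := by rw [pow_add, mul_inv_rev]
              _ = σ ^ k1 * σ ^ k2 * (a⁻¹ * b⁻¹) := by rw [c2]
              _ = σ ^ k1 * (σ ^ k2 * a⁻¹) * b⁻¹ := by group
              _ = σ ^ k1 * (a⁻¹ * σ ^ k2) * b⁻¹ := by rw [← c1]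
              _ = (σ ^ k1 * a⁻¹) * (σ ^ k2 * b⁻¹) := by group
          rw [he]
          exact hmul1 h1 h2
        · refine ⟨k1' + k2', ?_⟩
          have he : σ ^ (k1' + k2') * (a * b) = (σ ^ k1' * a) * (σ ^ k2' * b) := by
            have c1 : a * σ ^ k2' = σ ^ k2' * a := hcentral a haZ _
            calc σ ^ (k1' + k2') * (a * b)
                = σ ^ k1' * (σ ^ k2' * a) * b := by rw [pow_add]; group
              _ = σ ^ k1' * (a * σ ^ k2') * b := by rw [← c1]
              _ = (σ ^ k1' * a) * (σ ^ k2' * b) := by group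
          rw [he]
          exact hmul1 h1' h2'
    | inv a ha iha =>
        refine ⟨by simpa using iha.2, by simpa [inv_inv] using iha.1⟩
  -- powers of σ are cofinal in G
  have hcofσ : ∀ g : G, ∃ k : ℕ, r g (σ ^ k) := by
    intro g
    obtain ⟨z₁, hz₁, z₂, hz₂, hg1, hg2⟩ := hcof g
    obtain ⟨k, hk⟩ := hdom z₂ hz₂
    have hpos : r 1 (σ ^ (k + 1) * z₂⁻¹) := by
      have he : σ ^ (k + 1) * z₂⁻¹ = σ * (σ ^ k * z₂⁻¹) := by
        rw [pow_succ']; rw [mul_assoc]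
      rw [he]
      rcases hk with h | h
      · exact hmul hσP h
      · rw [h, mul_one]; exact hσP
    have hz2σ : r z₂ (σ ^ (k + 1)) := by
      have h2 := hleft z₂ 1 (σ ^ (k + 1) * z₂⁻¹) hpos
      rw [mul_one] at h2
      have he : z₂ * (σ ^ (k + 1) * z₂⁻¹) = σ ^ (k + 1) := by
        rw [← mul_assoc, hcentral z₂ hz₂ (σ ^ (k + 1))]
        group
      rwa [he] at h2
    exact ⟨k + 1, htrans _ _ _ hg2 hz2σ⟩
  have hmono : ∀ j k : ℕ, j ≤ k → ∀ g : G, r g (σ ^ j) → r g (σ ^ k) := by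
    intro j k hjk g hg
    rcases Nat.eq_or_lt_of_le hjk with rfl | hlt
    · exact hg
    · have h1 : r 1 (σ ^ (k - j)) := hσpow _ (by omega)
      have h2 := hleft (σ ^ j) 1 (σ ^ (k - j)) h1
      rw [mul_one, ← pow_add, Nat.add_sub_cancel' hjk] at h2
      exact htrans _ _ _ hg h2
  have hsel : ∀ (f : ℕ → G) (n : ℕ), ∃ k : ℕ, 1 ≤ k ∧ ∀ i ≤ n, r (f i) (σ ^ k) := by
    intro f n
    induction n with
    | zero =>
        obtain ⟨k, hk⟩ := hcofσ (f 0)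
        refine ⟨max k 1, le_max_right _ _, ?_⟩
        intro i hi
        have : i = 0 := by omega
        subst this
        exact hmono k _ (le_max_left _ _) _ hk
    | succ n ih =>
        obtain ⟨k, hk1, hk⟩ := ih
        obtain ⟨k', hk'⟩ := hcofσ (f (n + 1))
        refine ⟨max k k', le_trans hk1 (le_max_left _ _), ?_⟩
        intro i hi
        rcases Nat.lt_or_ge i (n + 1) with h | h
        · exact hmono k _ (le_max_left _ _) _ (hk i (by omega))
        · have : i = n + 1 := by omega
          subst this
          exact hmono k' _ (le_max_right _ _) _ hk'
  set ρ : ℕ := max 1 (wordLength X σ) with hρ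
  refine ⟨ρ, le_max_left _ _, ?_⟩
  -- connect any positive element to a power of σ
  have hconn : ∀ a : G, r 1 a → ∃ k : ℕ, 1 ≤ k ∧
      IsRPath X ρ {g : G | r 1 g} a (σ ^ k) := by
    intro a ha
    obtain ⟨l, hlX, hlprod⟩ := exists_word' hXsym hXgen a
    obtain ⟨k, hk1, hk⟩ := hsel (fun i => ((l.take i).prod)⁻¹) l.length
    -- path from σ^k to σ^k * a along prefixes
    have path2 : IsRPath X ρ {g : G | r 1 g} (σ ^ k) (σ ^ k * a) := by
      have hmem : ∀ i ≤ l.length, (fun i => σ ^ k * (l.take i).prod) i ∈ {g : G | r 1 g} := by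
        intro i hi
        have h1 := hleft ((l.take i).prod) _ _ (hk i hi)
        rw [mul_inv_cancel] at h1
        show r 1 (σ ^ k * (l.take i).prod)
        rwa [hσcen k ((l.take i).prod)]
      have hdist : ∀ i < l.length,
          wordDist X ((fun i => σ ^ k * (l.take i).prod) i)
            ((fun i => σ ^ k * (l.take i).prod) (i + 1)) ≤ ρ := by
        intro i hi
        have hts : (l.take (i + 1)).prod = (l.take i).prod * l[i] :=
          List.prod_take_succ l i hi
        have he : (σ ^ k * (l.take i).prod)⁻¹ * (σ ^ k * (l.take (i + 1)).prod) = l[i] := by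
          rw [hts]; group
        show wordDist X (σ ^ k * (l.take i).prod) (σ ^ k * (l.take (i + 1)).prod) ≤ ρ
        unfold wordDist
        rw [he]
        exact le_trans (wordLength_le_one' (hlX _ (List.getElem_mem hi))) (le_max_left _ _)
      have hpath := isRPath_of_fun (X := X) (S := {g : G | r 1 g}) (ρ := ρ)
        (fun i => σ ^ k * (l.take i).prod) l.length hmem hdist
      simpa [List.take_length, hlprod] using hpath
    -- path from a to σ^k * a along the σ-ray
    have path1 : IsRPath X ρ {g : G | r 1 g} a (σ ^ k * a) := by
      have hmem : ∀ i ≤ k, (fun i => σ ^ i * a) i ∈ {g : G | r 1 g} := by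
        intro i hi
        show r 1 (σ ^ i * a)
        rcases Nat.eq_zero_or_pos i with rfl | hpos
        · rwa [pow_zero, one_mul]
        · exact hmul (hσpow i hpos) ha
      have hdist : ∀ i < k,
          wordDist X ((fun i => σ ^ i * a) i) ((fun i => σ ^ i * a) (i + 1)) ≤ ρ := by
        intro i hi
        have hca : σ * a = a * σ := hcentral σ hσZ a
        have he : (σ ^ i * a)⁻¹ * (σ ^ (i + 1) * a) = σ := by
          have h1 : (σ ^ i * a)⁻¹ * (σ ^ (i + 1) * a) = a⁻¹ * (σ * a) := by
            group
          rw [h1, hca, inv_mul_cancel_left]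
        show wordDist X (σ ^ i * a) (σ ^ (i + 1) * a) ≤ ρ
        unfold wordDist
        rw [he]
        exact le_max_right _ _
      have hpath := isRPath_of_fun (X := X) (S := {g : G | r 1 g})
        (fun i => σ ^ i * a) k hmem hdist
      simpa using hpath
    exact ⟨k, hk1, isRPath_trans' path1 (isRPath_symm' hXsym path2)⟩
  -- the σ-ray is a path
  have hray : ∀ j k : ℕ, 1 ≤ j → j ≤ k →
      IsRPath X ρ {g : G | r 1 g} (σ ^ j) (σ ^ k) := by
    intro j k hj hjk
    have hmem : ∀ i ≤ k - j, (fun i => σ ^ (j + i)) i ∈ {g : G | r 1 g} := by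
      intro i _
      exact hσpow (j + i) (by omega)
    have hdist : ∀ i < k - j,
        wordDist X ((fun i => σ ^ (j + i)) i) ((fun i => σ ^ (j + i)) (i + 1)) ≤ ρ := by
      intro i _
      have he : (σ ^ (j + i))⁻¹ * σ ^ (j + (i + 1)) = σ := by
        rw [show j + (i + 1) = (j + i) + 1 by omega, pow_succ]
        rw [← mul_assoc, inv_mul_cancel, one_mul]
      show wordDist X (σ ^ (j + i)) (σ ^ (j + (i + 1))) ≤ ρ
      unfold wordDist
      rw [he]
      exact le_max_right _ _
    have hpath := isRPath_of_fun (X := X) (S := {g : G | r 1 g})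
      (fun i => σ ^ (j + i)) (k - j) hmem hdist
    simpa [Nat.add_sub_cancel' hjk] using hpath
  -- assemble
  intro a ha b hb
  obtain ⟨k₁, hk₁, p₁⟩ := hconn a ha
  obtain ⟨k₂, hk₂, p₂⟩ := hconn b hb
  exact isRPath_trans'
    (isRPath_trans' p₁ (hray k₁ (max k₁ k₂) hk₁ (le_max_left _ _)))
    (isRPath_symm' hXsym (isRPath_trans' p₂ (hray k₂ (max k₁ k₂) hk₂ (le_max_right _ _))))
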